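/- There exists a linear subspace C of the even-weight subspace of F_2^M, all of whose nonzero elements have Hamming weight at least 2N+2, with dim C ≥ M - 1 - ⌈log₂(∑_{j=0}^{N} C(M, 2j))⌉ (Gilbert–Varshamov bound for even-weight codes). -/

import Mathlib

open Finset Module

private lemma zmod2_cases : ∀ a : ZMod 2, a = 0 ∨ a = 1 := by decide

private lemma zmod2_eq_one {x : ZMod 2} (h : x ≠ 0) : x = 1 := by
  rcases zmod2_cases x with h0 | h1 <;> tauto

/-- The parity linear map. -/
private def phi (M : ℕ) : (Fin M → ZMod 2) →ₗ[ZMod 2] ZMod 2 where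
  toFun v := ∑ i, v i
  map_add' u v := by simp [Finset.sum_add_distrib]
  map_smul' a v := by simp [Finset.mul_sum]

private lemma sum_eq_norm (M : ℕ) (v : Fin M → ZMod 2) :
    phi M v = (hammingNorm v : ZMod 2) := by
  show (∑ i, v i) = _
  rw [← Finset.sum_filter_ne_zero Finset.univ]
  rw [Finset.sum_congr rfl (fun i hi => zmod2_eq_one (Finset.mem_filter.mp hi).2)]
  simp [hammingNorm]

private lemma mem_ker_iff (M : ℕ) (v : Fin M → ZMod 2) :
    v ∈ LinearMap.ker (phi M) ↔ Even (hammingNorm v) := by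
  rw [LinearMap.mem_ker, sum_eq_norm, ZMod.natCast_eq_zero_iff,
    Nat.even_iff, Nat.dvd_iff_mod_eq_zero]

private lemma card_norm_eq (M k : ℕ) :
    (Finset.univ.filter fun v : Fin M → ZMod 2 => hammingNorm v = k).card ≤ M.choose k := by
  classical
  have := Finset.card_le_card_of_injOn
    (f := fun v : Fin M → ZMod 2 => Finset.univ.filter fun i => v i ≠ 0)
    (s := Finset.univ.filter fun v : Fin M → ZMod 2 => hammingNorm v = k)
    (t := Finset.univ.powersetCard k)
    (fun v hv => by
      rw [Finset.mem_coe, Finset.mem_powersetCard]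
      exact ⟨Finset.subset_univ _, (Finset.mem_filter.mp (Finset.mem_coe.mp hv)).2⟩)
    (fun v _ w _ h => by
      funext i
      have : (v i ≠ 0) ↔ (w i ≠ 0) := by
        constructor <;> intro h' <;>
          [have := (Finset.ext_iff.mp h i).mp (Finset.mem_filter.mpr ⟨Finset.mem_univ i, h'⟩);
           have := (Finset.ext_iff.mp h i).mpr (Finset.mem_filter.mpr ⟨Finset.mem_univ i, h'⟩)] <;>
          exact (Finset.mem_filter.mp this).2
      rcases zmod2_cases (v i) with h0 | h1 <;> rcases zmod2_cases (w i) with g0 | g1 <;>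
        simp_all)
  simpa [Finset.card_powersetCard] using this

/-- Gilbert–Varshamov bound for even-weight codes: there exists a linear
subspace `C` of the even-weight subspace of `F_2^M`, all of whose nonzero elements have
Hamming weight at least `2N+2`, with `dim C ≥ M - 1 - ⌈log₂(∑_{j=0}^{N} C(M, 2j))⌉`. -/
theorem stmt4 (M N : ℕ) :
    ∃ C : Submodule (ZMod 2) (Fin M → ZMod 2),
      (∀ v ∈ C, Even (hammingNorm v)) ∧
      (∀ v ∈ C, v ≠ 0 → 2 * N + 2 ≤ hammingNorm v) ∧
      M - 1 - Nat.clog 2 (∑ j ∈ Finset.range (N + 1), M.choose (2 * j)) ≤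
        Module.finrank (ZMod 2) C := by
  classical
  set S := ∑ j ∈ Finset.range (N + 1), M.choose (2 * j) with hS
  set V := LinearMap.ker (phi M) with hV
  set P : Submodule (ZMod 2) (Fin M → ZMod 2) → Prop :=
    fun C => C ≤ V ∧ ∀ v ∈ C, v ≠ 0 → 2 * N + 2 ≤ hammingNorm v with hP
  have hPbot : P ⊥ := ⟨bot_le, by simp⟩
  set D : Set ℕ := {n | ∃ C, P C ∧ Module.finrank (ZMod 2) C = n} with hD
  have hDne : D.Nonempty := ⟨_, ⊥, hPbot, rfl⟩
  have hDbdd : BddAbove D := by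
    refine ⟨M, fun n hn => ?_⟩
    obtain ⟨C, _, rfl⟩ := hn
    have h1 := Submodule.finrank_le C
    rwa [Module.finrank_pi, Fintype.card_fin] at h1
  obtain ⟨C, hPC, hCd⟩ := Nat.sSup_mem hDne hDbdd
  refine ⟨C, fun v hv => (mem_ker_iff M v).mp (hPC.1 hv), hPC.2, ?_⟩
  -- maximality
  have hmax : ∀ x, x ∈ V → ∃ c ∈ C, hammingNorm (x - c) ≤ 2 * N + 1 := by
    intro x hx
    by_cases hxC : x ∈ C
    · exact ⟨x, hxC, by simp⟩
    set C' := C ⊔ Submodule.span (ZMod 2) {x} with hC'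
    have hxC' : x ∈ C' := Submodule.mem_sup_right (Submodule.mem_span_singleton_self x)
    have hlt : C < C' := lt_of_le_of_ne le_sup_left (fun h => hxC (h ▸ hxC'))
    have hfr : Module.finrank (ZMod 2) C < Module.finrank (ZMod 2) C' :=
      Submodule.finrank_lt_finrank_of_lt hlt
    have hnP : ¬ P C' := by
      intro hPC'
      have : Module.finrank (ZMod 2) C' ≤ sSup D := le_csSup hDbdd ⟨C', hPC', rfl⟩
      omega
    have hC'V : C' ≤ V := sup_le hPC.1 ((Submodule.span_singleton_le_iff_mem x V).mpr hx)
    have hnP' : ∃ v ∈ C', v ≠ 0 ∧ hammingNorm v < 2 * N + 2 := by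
      by_contra hcon
      push_neg at hcon
      exact hnP ⟨hC'V, hcon⟩
    obtain ⟨v, hvC', hvne, hvwt⟩ := hnP'
    obtain ⟨c, hc, s, hs, rfl⟩ := Submodule.mem_sup.mp hvC'
    obtain ⟨a, rfl⟩ := Submodule.mem_span_singleton.mp hs
    rcases zmod2_cases a with rfl | rfl
    · simp only [zero_smul, add_zero] at hvne hvwt
      exact absurd (hPC.2 c hc hvne) (by omega)
    · refine ⟨-c, neg_mem hc, ?_⟩
      have hxe : x - -c = c + (1 : ZMod 2) • x := by
        rw [one_smul, sub_neg_eq_add, add_comm]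
      rw [hxe]
      omega
  -- counting
  set Vs : Finset (Fin M → ZMod 2) := Finset.univ.filter (· ∈ V) with hVs
  set Cs : Finset (Fin M → ZMod 2) := Finset.univ.filter (· ∈ C) with hCs
  set Bs : Finset (Fin M → ZMod 2) :=
    Finset.univ.filter (fun v => Even (hammingNorm v) ∧ hammingNorm v ≤ 2 * N + 1) with hBs
  have hcover : Vs ⊆ Finset.image (fun p : _ × _ => p.1 + p.2) (Cs ×ˢ Bs) := by
    intro x hx
    have hxV : x ∈ V := (Finset.mem_filter.mp hx).2
    obtain ⟨c, hc, hb⟩ := hmax x hxV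
    refine Finset.mem_image.mpr ⟨(c, x - c), Finset.mem_product.mpr ⟨?_, ?_⟩, by rw [add_comm]; exact sub_add_cancel x c⟩
    · exact Finset.mem_filter.mpr ⟨Finset.mem_univ _, hc⟩
    · refine Finset.mem_filter.mpr ⟨Finset.mem_univ _, ?_, hb⟩
      exact (mem_ker_iff M _).mp (sub_mem hxV (hPC.1 hc))
  have hBcard : Bs.card ≤ S := by
    have hsub : Bs ⊆ (Finset.range (N + 1)).biUnion
        (fun j => Finset.univ.filter fun v : Fin M → ZMod 2 => hammingNorm v = 2 * j) := by
      intro v hv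
      obtain ⟨_, ⟨j, hj⟩, hle⟩ := Finset.mem_filter.mp hv
      refine Finset.mem_biUnion.mpr ⟨j, Finset.mem_range.mpr (by omega), ?_⟩
      exact Finset.mem_filter.mpr ⟨Finset.mem_univ _, by omega⟩
    calc Bs.card ≤ _ := Finset.card_le_card hsub
      _ ≤ ∑ j ∈ Finset.range (N + 1),
            (Finset.univ.filter fun v : Fin M → ZMod 2 => hammingNorm v = 2 * j).card :=
        Finset.card_biUnion_le
      _ ≤ S := Finset.sum_le_sum fun j _ => card_norm_eq M (2 * j)
  have hVcard : 2 ^ (M - 1) ≤ Vs.card := by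
    have h1 : Vs.card = Fintype.card V := (Fintype.card_subtype _).symm
    have h2 : Fintype.card V = 2 ^ Module.finrank (ZMod 2) V := by
      have := card_eq_pow_finrank (K := ZMod 2) (V := V)
      rwa [ZMod.card] at this
    have h3 : M - 1 ≤ Module.finrank (ZMod 2) V := by
      rw [hV]
      have hrn := LinearMap.finrank_range_add_finrank_ker (phi M)
      rw [Module.finrank_pi, Fintype.card_fin] at hrn
      have h4 : Module.finrank (ZMod 2) (LinearMap.range (phi M)) ≤ 1 := by
        have := Submodule.finrank_le (LinearMap.range (phi M))
        rwa [Module.finrank_self] at this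
      omega
    rw [h1, h2]
    exact Nat.pow_le_pow_right (by norm_num) h3
  have hCcard : Cs.card = 2 ^ Module.finrank (ZMod 2) C := by
    have h1 : Cs.card = Fintype.card C := (Fintype.card_subtype _).symm
    have h2 : Fintype.card C = 2 ^ Module.finrank (ZMod 2) C := by
      have := card_eq_pow_finrank (K := ZMod 2) (V := C)
      rwa [ZMod.card] at this
    rw [h1, h2]
  have hchain : 2 ^ (M - 1) ≤ 2 ^ (Module.finrank (ZMod 2) C + Nat.clog 2 S) := by
    calc 2 ^ (M - 1) ≤ Vs.card := hVcard
      _ ≤ (Finset.image (fun p : _ × _ => p.1 + p.2) (Cs ×ˢ Bs)).card :=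
        Finset.card_le_card hcover
      _ ≤ (Cs ×ˢ Bs).card := Finset.card_image_le
      _ = Cs.card * Bs.card := Finset.card_product _ _
      _ ≤ 2 ^ Module.finrank (ZMod 2) C * 2 ^ Nat.clog 2 S := by
        exact Nat.mul_le_mul (le_of_eq hCcard)
          (hBcard.trans (Nat.le_pow_clog (by norm_num) S))
      _ = 2 ^ (Module.finrank (ZMod 2) C + Nat.clog 2 S) := (pow_add 2 _ _).symm
  have := (Nat.pow_le_pow_iff_right (by norm_num : 1 < 2)).mp hchain
  omega
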